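/- Let (G,σ) be a signed graph such that G⁺ is connected and (G,σ) contains no barbell, and let e and e' be two distinct negative edges of (G,σ). Then there exists a positive cycle C of (G,σ) containing both e and e' with 2|E(C)| ≤ 2|E(G)| − |E(Ĝ⁺)|, where Ĝ⁺ is the maximal bridgeless subgraph of G⁺. -/

import Mathlib

open SimpleGraph Set
open scoped symmDiff

variable {V : Type*}

/-- `J` is a `T`-join of `G`: a set of edges of `G` such that a vertex has odd degree
in the spanning subgraph with edge set `J` iff it belongs to `T`. -/
def IsTJoin (G : SimpleGraph V) (T : Set V) (J : Set (Sym2 V)) : Prop :=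
  J ⊆ G.edgeSet ∧ ∀ v : V, (Odd {e ∈ J | v ∈ e}.ncard ↔ v ∈ T)

/-- The edge set of the maximal bridgeless subgraph of `G`: all non-bridge edges. -/
def nonBridgeEdges (G : SimpleGraph V) : Set (Sym2 V) :=
  {e ∈ G.edgeSet | ¬ G.IsBridge e}

/-- A graph is 2-edge-connected if it is connected, has at least two vertices,
and has no bridge. -/
def TwoEdgeConnected (G : SimpleGraph V) : Prop :=
  G.Connected ∧ Nontrivial V ∧ ∀ e, ¬ G.IsBridge e

/-- `H` is the edge set of an even subgraph of `G`: every vertex has even degree. -/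
def IsEvenEdgeSet (G : SimpleGraph V) (H : Set (Sym2 V)) : Prop :=
  H ⊆ G.edgeSet ∧ ∀ v : V, Even {e ∈ H | v ∈ e}.ncard

/-! Signed graphs: a signature is `σ : Sym2 V → Bool`, `σ e = true` meaning `e` is negative. -/

/-- The set of negative edges of `(G, σ)`. -/
def negEdgeSet (G : SimpleGraph V) (σ : Sym2 V → Bool) : Set (Sym2 V) :=
  {e ∈ G.edgeSet | σ e = true}

/-- The set of positive edges of `(G, σ)`. -/
def posEdgeSet (G : SimpleGraph V) (σ : Sym2 V → Bool) : Set (Sym2 V) :=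
  {e ∈ G.edgeSet | σ e = false}

/-- `G⁺`: the spanning subgraph of `G` on the positive edges. -/
def gplus (G : SimpleGraph V) (σ : Sym2 V → Bool) : SimpleGraph V :=
  G.deleteEdges {e | σ e = true}

/-- `C` is the edge set and `S` the vertex set of a cycle of `G`. -/
def IsCycleSet (G : SimpleGraph V) (C : Set (Sym2 V)) (S : Set V) : Prop :=
  ∃ (v : V) (w : G.Walk v v), w.IsCycle ∧ C = {e | e ∈ w.edges} ∧ S = {x | x ∈ w.support}

/-- `C` (with vertex set `S`) is a negative cycle: it has an odd number of negative edges. -/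
def IsNegCycle (G : SimpleGraph V) (σ : Sym2 V → Bool) (C : Set (Sym2 V)) (S : Set V) : Prop :=
  IsCycleSet G C S ∧ Odd {e ∈ C | σ e = true}.ncard

/-- `C` is (the edge set of) a positive cycle: it has an even number of negative edges. -/
def IsPosCycle (G : SimpleGraph V) (σ : Sym2 V → Bool) (C : Set (Sym2 V)) : Prop :=
  (∃ S, IsCycleSet G C S) ∧ Even {e ∈ C | σ e = true}.ncard

/-- `B` is a short barbell whose two negative cycles have edge sets `C₁` and `C₂`:
the two negative cycles meet in exactly one vertex. -/
def IsShortBarbellWith (G : SimpleGraph V) (σ : Sym2 V → Bool)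
    (B C₁ C₂ : Set (Sym2 V)) : Prop :=
  ∃ S₁ S₂, IsNegCycle G σ C₁ S₁ ∧ IsNegCycle G σ C₂ S₂ ∧
    (∃ v, S₁ ∩ S₂ = {v}) ∧ B = C₁ ∪ C₂

/-- `B` is a long barbell whose two negative cycles have edge sets `C₁` and `C₂`:
two vertex-disjoint negative cycles joined by a path meeting them only in its endpoints. -/
def IsLongBarbellWith (G : SimpleGraph V) (σ : Sym2 V → Bool)
    (B C₁ C₂ : Set (Sym2 V)) : Prop :=
  ∃ (S₁ S₂ : Set V) (u v : V) (p : G.Walk u v), IsNegCycle G σ C₁ S₁ ∧ IsNegCycle G σ C₂ S₂ ∧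
    Disjoint S₁ S₂ ∧ p.IsPath ∧ u ∈ S₁ ∧ v ∈ S₂ ∧
    {x | x ∈ p.support} ∩ S₁ = {u} ∧ {x | x ∈ p.support} ∩ S₂ = {v} ∧
    B = C₁ ∪ C₂ ∪ {e | e ∈ p.edges}

/-- `B` is a barbell whose two negative cycles have edge sets `C₁` and `C₂`. -/
def IsBarbellWith (G : SimpleGraph V) (σ : Sym2 V → Bool) (B C₁ C₂ : Set (Sym2 V)) : Prop :=
  IsShortBarbellWith G σ B C₁ C₂ ∨ IsLongBarbellWith G σ B C₁ C₂

/-- `B` is (the edge set of) a barbell of `(G, σ)`. -/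
def IsBarbell (G : SimpleGraph V) (σ : Sym2 V → Bool) (B : Set (Sym2 V)) : Prop :=
  ∃ C₁ C₂, IsBarbellWith G σ B C₁ C₂

/-- A signed-circuit is a positive cycle or a barbell. -/
def IsSignedCircuit (G : SimpleGraph V) (σ : Sym2 V → Bool) (D : Set (Sym2 V)) : Prop :=
  IsPosCycle G σ D ∨ IsBarbell G σ D

open Classical in
/-- `τ(G,σ)`: `|E(G)|` if there is no barbell, otherwise the minimum over all barbells of
the total number of edges of its two negative cycles. -/
noncomputable def tau (G : SimpleGraph V) (σ : Sym2 V → Bool) : ℕ :=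
  if ∃ B, IsBarbell G σ B then
    sInf {n | ∃ B C₁ C₂, IsBarbellWith G σ B C₁ C₂ ∧ n = C₁.ncard + C₂.ncard}
  else G.edgeSet.ncard

/-- The length of a family of signed-circuits (counted with multiplicity). -/
noncomputable def circuitLength (𝓕 : Multiset (Set (Sym2 V))) : ℕ := (𝓕.map Set.ncard).sum

/-- `𝓕` is a signed-circuit cover of `(G, σ)`. -/
def IsSignedCircuitCover (G : SimpleGraph V) (σ : Sym2 V → Bool)
    (𝓕 : Multiset (Set (Sym2 V))) : Prop :=
  (∀ C ∈ 𝓕, IsSignedCircuit G σ C) ∧ ∀ e ∈ G.edgeSet, ∃ C ∈ 𝓕, e ∈ C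

/-- `e` has exactly one endpoint in `U`. -/
def Crosses (U : Set V) (e : Sym2 V) : Prop :=
  ∃ x y, e = s(x, y) ∧ x ∈ U ∧ y ∉ U

open Classical in
/-- The signature obtained from `σ` by switching at the vertex set `U`. -/
noncomputable def switchSign (σ : Sym2 V → Bool) (U : Set V) : Sym2 V → Bool :=
  fun e => if Crosses U e then !(σ e) else σ e

/-- Two signatures are equivalent if one is obtained from the other by switching. -/
def EquivSign (σ σ' : Sym2 V → Bool) : Prop := ∃ U : Set V, σ' = switchSign σ U

/-- The minimum number of negative edges lying entirely inside `W`, over all signatures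
equivalent to `σ` (the negativeness of the signed subgraph induced on `W`). -/
noncomputable def negOn (G : SimpleGraph V) (σ : Sym2 V → Bool) (W : Set V) : ℕ :=
  sInf {n | ∃ U : Set V,
    n = {e | e ∈ G.edgeSet ∧ (∀ x ∈ e, x ∈ W) ∧ switchSign σ U e = true}.ncard}

/-- The negativeness `ε(G,σ)`. -/
noncomputable def negativeness (G : SimpleGraph V) (σ : Sym2 V → Bool) : ℕ :=
  negOn G σ Set.univ

/-- The signed subgraph induced on `W` is balanced. -/
def BalancedOn (G : SimpleGraph V) (σ : Sym2 V → Bool) (W : Set V) : Prop :=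
  negOn G σ W = 0

/-- `(G, σ)` is flow-admissible: each connected component has negativeness ≠ 1, and
for every bridge, neither of the two components obtained by deleting it is balanced. -/
def FlowAdmissible (G : SimpleGraph V) (σ : Sym2 V → Bool) : Prop :=
  ∀ x : V,
    negOn G σ {y | G.Reachable x y} ≠ 1 ∧
    ∀ e ∈ G.edgeSet, G.IsBridge e → (∀ z ∈ e, G.Reachable x z) →
      ∀ z ∈ e, ¬ BalancedOn G σ {y | (G.deleteEdges {e}).Reachable z y}

/-- `{e, f}` is a 2-edge-cut of `G`. -/
def IsTwoEdgeCut (G : SimpleGraph V) (e f : Sym2 V) : Prop :=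
  e ∈ G.edgeSet ∧ f ∈ G.edgeSet ∧ e ≠ f ∧ ¬ G.IsBridge e ∧ ¬ G.IsBridge f ∧
    ¬ (G.deleteEdges {e, f}).Connected


section Helpers

open scoped symmDiff


/-- Parity of the number of edge-list entries of a walk containing a vertex. -/
lemma walk_incidence_parity {G : SimpleGraph V} [DecidableEq V] :
    ∀ {u v : V} (w : G.Walk u v) (x : V),
      (w.edges.filter (fun g => x ∈ g)).length % 2
        = ((if x = u then 1 else 0) + (if x = v then 1 else 0)) % 2 := by
  intro u v w
  induction w with
  | nil =>
    rename_i u0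
    intro x
    by_cases hxu : x = u0 <;> simp [hxu]
  | @cons u y v h p ih =>
    intro x
    have hne : u ≠ y := h.ne
    have IH := ih x
    rw [Walk.edges_cons, List.filter_cons]
    by_cases hx : x ∈ s(u, y)
    · rw [if_pos (by simpa using hx), List.length_cons]
      rw [Sym2.mem_iff] at hx
      rcases hx with rfl | rfl
      · rw [if_pos rfl]
        rw [if_neg hne] at IH
        by_cases hv : x = v
        · rw [if_pos hv] at IH ⊢; omega
        · rw [if_neg hv] at IH ⊢; omega
      · rw [if_neg (Ne.symm hne)]
        rw [if_pos rfl] at IH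
        by_cases hv : x = v
        · rw [if_pos hv] at IH ⊢; omega
        · rw [if_neg hv] at IH ⊢; omega
    · rw [if_neg (by simpa using hx)]
      rw [Sym2.mem_iff] at hx
      push_neg at hx
      rw [if_neg hx.1]
      rw [if_neg hx.2] at IH
      by_cases hv : x = v
      · rw [if_pos hv] at IH ⊢; omega
      · rw [if_neg hv] at IH ⊢; omega

lemma closed_walk_incidence_even {G : SimpleGraph V} [DecidableEq V] {u : V}
    (w : G.Walk u u) (x : V) : Even (w.edges.filter (fun g => x ∈ g)).length := by
  have h := walk_incidence_parity w x
  rw [Nat.even_iff]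
  by_cases hxu : x = u
  · rw [if_pos hxu] at h; omega
  · rw [if_neg hxu] at h; omega

lemma open_walk_incidence_odd {G : SimpleGraph V} [DecidableEq V] {u v : V}
    (w : G.Walk u v) (huv : u ≠ v) : Odd (w.edges.filter (fun g => v ∈ g)).length := by
  have h := walk_incidence_parity w v
  rw [Nat.odd_iff]
  rw [if_neg (Ne.symm huv), if_pos rfl] at h
  omega

section FinsetHelpers
variable {α : Type*} [DecidableEq α]
lemma card_symmDiff_identity (A B : Finset α) :
    (A ∆ B).card + 2 * (A ∩ B).card = A.card + B.card := by
  have h1 : A ∆ B = (A \ B) ∪ (B \ A) := by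
    rw [symmDiff_def]; rfl
  have hd : Disjoint (A \ B) (B \ A) :=
    Finset.disjoint_left.mpr (fun a ha hb => (Finset.mem_sdiff.mp hb).2 (Finset.mem_sdiff.mp ha).1)
  have h2 := Finset.card_union_of_disjoint hd
  have h3 := Finset.card_sdiff_add_card_inter A B
  have h4 := Finset.card_sdiff_add_card_inter B A
  rw [Finset.inter_comm] at h4
  rw [h1, h2]
  omega

lemma filter_symmDiff_eq (p : α → Prop) [DecidablePred p] (A B : Finset α) :
    (A ∆ B).filter p = (A.filter p) ∆ (B.filter p) := by
  ext a
  simp only [Finset.mem_filter, Finset.mem_symmDiff]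
  tauto

lemma even_card_symmDiff {A B : Finset α} (hA : Even A.card) (hB : Even B.card) :
    Even (A ∆ B).card := by
  have := card_symmDiff_identity A B
  rw [Nat.even_iff] at *
  omega

lemma even_card_sdiff {A B : Finset α} (hBA : B ⊆ A) (hA : Even A.card) (hB : Even B.card) :
    Even (A \ B).card := by
  have h := Finset.card_sdiff_add_card_inter A B
  rw [Finset.inter_eq_right.mpr hBA] at h
  rw [Nat.even_iff] at *
  omega

/-- Abstract counting lemma: if a nonempty ∆-closed family of subsets of `E0` covers `E0`
and each member meets `A` in at most half of itself, then `2|A| ≤ |E0|`. -/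
lemma count_lemma (E0 : Finset α) (ZF : Finset (Finset α))
    (hne : ZF.Nonempty) (hsub : ∀ Z ∈ ZF, Z ⊆ E0)
    (hclosed : ∀ Z₁ ∈ ZF, ∀ Z₂ ∈ ZF, Z₁ ∆ Z₂ ∈ ZF)
    (hcov : ∀ f ∈ E0, ∃ Z ∈ ZF, f ∈ Z)
    (A : Finset α) (hA : A ⊆ E0) (hmin : ∀ Z ∈ ZF, 2 * (Z ∩ A).card ≤ Z.card) :
    2 * A.card ≤ E0.card := by
  classical
  -- each element of E0 is in exactly half of the members of ZF
  have key : ∀ f ∈ E0, ZF.card = 2 * (ZF.filter (fun Z => f ∈ Z)).card := by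
    intro f hf
    obtain ⟨Zf, hZf, hfZf⟩ := hcov f hf
    have hbij : (ZF.filter (fun Z => f ∈ Z)).card = (ZF.filter (fun Z => ¬ f ∈ Z)).card := by
      apply Finset.card_bij' (fun Z _ => Z ∆ Zf) (fun Z _ => Z ∆ Zf)
      · intro Z hZ
        simp only [Finset.mem_filter] at hZ ⊢
        refine ⟨hclosed _ hZ.1 _ hZf, ?_⟩
        simp [Finset.mem_symmDiff, hZ.2, hfZf]
      · intro Z hZ
        simp only [Finset.mem_filter] at hZ ⊢
        refine ⟨hclosed _ hZ.1 _ hZf, ?_⟩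
        simp [Finset.mem_symmDiff, hZ.2, hfZf]
      · intro Z _; exact symmDiff_symmDiff_cancel_right Zf Z
      · intro Z _; exact symmDiff_symmDiff_cancel_right Zf Z
    have hsplit := Finset.card_filter_add_card_filter_not
      (s := ZF) (p := fun Z => f ∈ Z)
    omega
  -- double counting
  have hsum1 : ∑ Z ∈ ZF, (Z ∩ A).card = ∑ f ∈ A, (ZF.filter (fun Z => f ∈ Z)).card := by
    have h1 : ∀ Z : Finset α, (Z ∩ A).card = ∑ f ∈ A, if f ∈ Z then 1 else 0 := by
      intro Z
      rw [← Finset.card_filter]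
      congr 1
      ext a
      simp [Finset.mem_inter, Finset.mem_filter, and_comm]
    have h2 : ∀ f : α, (ZF.filter (fun Z => f ∈ Z)).card = ∑ Z ∈ ZF, if f ∈ Z then 1 else 0 :=
      fun f => Finset.card_filter _ _
    simp_rw [h1, h2]
    exact Finset.sum_comm
  have hsum2 : ∑ Z ∈ ZF, Z.card = ∑ f ∈ E0, (ZF.filter (fun Z => f ∈ Z)).card := by
    have h1 : ∀ Z ∈ ZF, Z.card = ∑ f ∈ E0, if f ∈ Z then 1 else 0 := by
      intro Z hZ
      rw [← Finset.card_filter]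
      congr 1
      ext a
      simp only [Finset.mem_filter]
      exact ⟨fun h => ⟨hsub Z hZ h, h⟩, fun h => h.2⟩
    rw [Finset.sum_congr rfl h1]
    simp_rw [fun f => Finset.card_filter (fun Z => f ∈ Z) ZF]
    exact Finset.sum_comm
  have hineq : ∑ Z ∈ ZF, 2 * (Z ∩ A).card ≤ ∑ Z ∈ ZF, Z.card :=
    Finset.sum_le_sum hmin
  rw [← Finset.mul_sum, hsum1, hsum2] at hineq
  have hA' : (∑ f ∈ A, (ZF.filter (fun Z => f ∈ Z)).card) * 2 = A.card * ZF.card := by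
    rw [Finset.sum_mul]
    rw [Finset.sum_congr rfl (fun f hf => by rw [mul_comm, ← key f (hA hf)])]
    rw [Finset.sum_const, smul_eq_mul, mul_comm]
  have hE0' : (∑ f ∈ E0, (ZF.filter (fun Z => f ∈ Z)).card) * 2 = E0.card * ZF.card := by
    rw [Finset.sum_mul]
    rw [Finset.sum_congr rfl (fun f hf => by rw [mul_comm, ← key f hf])]
    rw [Finset.sum_const, smul_eq_mul, mul_comm]
  have h2 : (2 * A.card) * ZF.card ≤ E0.card * ZF.card := by
    calc (2 * A.card) * ZF.card = 2 * (A.card * ZF.card) := by ring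
      _ = 2 * ((∑ f ∈ A, (ZF.filter (fun Z => f ∈ Z)).card) * 2) := by rw [hA']
      _ = (2 * ∑ f ∈ A, (ZF.filter (fun Z => f ∈ Z)).card) * 2 := by ring
      _ ≤ (∑ f ∈ E0, (ZF.filter (fun Z => f ∈ Z)).card) * 2 := Nat.mul_le_mul_right 2 hineq
      _ = E0.card * ZF.card := hE0'
  have hZpos : 0 < ZF.card := Finset.card_pos.mpr hne
  exact Nat.le_of_mul_le_mul_right h2 hZpos

end FinsetHelpers


lemma closed_mem_tail_support {G : SimpleGraph V} {r : V} (w : G.Walk r r) (hnn : ¬ w.Nil)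
    {y : V} (hy : y ∈ w.support) : y ∈ w.support.tail := by
  obtain ⟨x, h, q, rfl⟩ := Walk.not_nil_iff.mp hnn
  rw [Walk.support_cons] at hy ⊢
  simp only [List.tail_cons]
  rcases List.mem_cons.mp hy with rfl | h'
  · exact q.end_mem_support
  · exact h'

lemma closed_trail_split {G : SimpleGraph V} [DecidableEq V] {v : V} {T : G.Walk v v}
    (hT : T.IsTrail) (hnn : ¬ T.Nil) (hnc : ¬ T.IsCycle) :
    ∃ (x : V) (T₁ T₂ : G.Walk x x), T₁.IsTrail ∧ T₂.IsTrail ∧ ¬T₁.Nil ∧ ¬T₂.Nil ∧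
      T₁.length + T₂.length = T.length ∧
      (∀ g, g ∈ T.edges ↔ (g ∈ T₁.edges ∨ g ∈ T₂.edges)) ∧
      (∀ g, g ∈ T₁.edges → g ∉ T₂.edges) := by
  have hTne : T ≠ Walk.nil := fun h => hnn (h ▸ Walk.nil_iff_eq_nil.mpr rfl)
  have hnodup : ¬ T.support.tail.Nodup := by
    intro h
    exact hnc ((Walk.isCycle_def T).mpr ⟨hT, hTne, h⟩)
  obtain ⟨x, hdup⟩ := List.exists_duplicate_iff_not_nodup.mpr hnodup
  have hcount : 2 ≤ T.support.tail.count x := List.duplicate_iff_two_le_count.mp hdup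
  have hx : x ∈ T.support := by
    have : x ∈ T.support.tail := hdup.mem
    exact List.mem_of_mem_tail this
  set w' := T.rotate x hx with hw'
  have hperm : (w'.support.tail) ~r T.support.tail := Walk.support_rotate T x hx
  have hTrail' : w'.IsTrail := hT.rotate hx
  have hperm_edges : w'.edges ~r T.edges := Walk.rotate_edges T x hx
  have hlen' : w'.length = T.length := by
    rw [← Walk.length_edges, ← Walk.length_edges]
    exact hperm_edges.perm.length_eq
  have hnn' : ¬ w'.Nil := by
    rw [Walk.nil_iff_length_eq, hlen', ← Walk.nil_iff_length_eq]
    exact hnn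
  obtain ⟨y, hadj, q, hq⟩ := Walk.not_nil_iff.mp hnn'
  have hcq : 2 ≤ q.support.count x := by
    have h1 : w'.support.tail = q.support := by rw [hq, Walk.support_cons]; rfl
    rw [← h1]
    have := hperm.perm.count_eq x
    omega
  have hxq : x ∈ q.support := List.count_pos_iff.mp (by omega)
  set tk := q.takeUntil x hxq with htk
  set dr := q.dropUntil x hxq with hdr
  have hspec : tk.append dr = q := Walk.take_spec q hxq
  have hq_edges : q.edges = tk.edges ++ dr.edges := by
    conv_lhs => rw [← hspec]
    exact Walk.edges_append _ _
  have hq_support : q.support = tk.support ++ dr.support.tail := by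
    conv_lhs => rw [← hspec]
    exact Walk.support_append _ _
  have hq_length : q.length = tk.length + dr.length := by
    conv_lhs => rw [← hspec]
    exact Walk.length_append _ _
  have hcount_tk : tk.support.count x = 1 := Walk.count_support_takeUntil_eq_one q hxq
  have hdr_nn : ¬ dr.Nil := by
    intro hnil
    have : dr = Walk.nil := Walk.nil_iff_eq_nil.mp hnil
    rw [hq_support, List.count_append, hcount_tk, this] at hcq
    simp at hcq
  refine ⟨x, Walk.cons hadj tk, dr, ?_, ?_, ?_, hdr_nn, ?_, ?_, ?_⟩
  · -- T₁ trail
    have hnodupe : w'.edges.Nodup := hTrail'.edges_nodup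
    rw [hq, Walk.edges_cons, hq_edges] at hnodupe
    rw [Walk.isTrail_def, Walk.edges_cons]
    have := List.nodup_cons.mp hnodupe
    have h2 := List.nodup_append.mp this.2
    exact List.nodup_cons.mpr ⟨fun hc => this.1 (List.mem_append_left _ hc), h2.1⟩
  · -- T₂ trail
    have hnodupe : w'.edges.Nodup := hTrail'.edges_nodup
    rw [hq, Walk.edges_cons, hq_edges] at hnodupe
    have := List.nodup_cons.mp hnodupe
    exact ⟨(List.nodup_append.mp this.2).2.1⟩
  · rw [Walk.nil_iff_length_eq, Walk.length_cons]; omega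
  · rw [Walk.length_cons, ← hlen', hq, Walk.length_cons, hq_length]; omega
  · intro g
    have hmem : g ∈ T.edges ↔ g ∈ w'.edges := (hperm_edges.perm.mem_iff).symm
    rw [hmem, hq, Walk.edges_cons, hq_edges, Walk.edges_cons]
    simp [List.mem_append, List.mem_cons, or_assoc]
  · intro g hg1 hg2
    have hnodupe : w'.edges.Nodup := hTrail'.edges_nodup
    rw [hq, Walk.edges_cons, hq_edges] at hnodupe
    have := List.nodup_cons.mp hnodupe
    rw [Walk.edges_cons] at hg1
    rcases List.mem_cons.mp hg1 with rfl | hg1'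
    · exact this.1 (List.mem_append_right _ hg2)
    · exact (List.nodup_append.mp this.2).2.2 _ hg1' _ hg2 rfl

lemma extract_cycle {G : SimpleGraph V} [DecidableEq V] :
    ∀ (n : ℕ) {v : V} (T : G.Walk v v), T.length ≤ n → T.IsTrail → ∀ {f}, f ∈ T.edges →
      ∃ (r : V) (w : G.Walk r r), w.IsCycle ∧ f ∈ w.edges ∧ ∀ g ∈ w.edges, g ∈ T.edges := by
  intro n
  induction n with
  | zero =>
    intro v T hlen _ f hf
    have h0 : T.edges.length = 0 := by rw [Walk.length_edges]; omega
    rw [List.length_eq_zero_iff] at h0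
    rw [h0] at hf
    simp at hf
  | succ n ih =>
    intro v T hlen hT f hf
    by_cases hc : T.IsCycle
    · exact ⟨v, T, hc, hf, fun g hg => hg⟩
    · have hnn : ¬ T.Nil := by
        intro h
        rw [Walk.nil_iff_length_eq] at h
        have h0 : T.edges.length = 0 := by rw [Walk.length_edges]; omega
        rw [List.length_eq_zero_iff] at h0
        rw [h0] at hf
        simp at hf
      obtain ⟨x, T₁, T₂, h1, h2, hn1, hn2, hsum, hiff, _⟩ := closed_trail_split hT hnn hc
      have hp1 : 0 < T₁.length := Walk.not_nil_iff_lt_length.mp hn1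
      have hp2 : 0 < T₂.length := Walk.not_nil_iff_lt_length.mp hn2
      rcases (hiff f).mp hf with hf1 | hf2
      · obtain ⟨r, w, hw, hfw, hsub⟩ := ih T₁ (by omega) h1 hf1
        exact ⟨r, w, hw, hfw, fun g hg => (hiff g).mpr (Or.inl (hsub g hg))⟩
      · obtain ⟨r, w, hw, hfw, hsub⟩ := ih T₂ (by omega) h2 hf2
        exact ⟨r, w, hw, hfw, fun g hg => (hiff g).mpr (Or.inr (hsub g hg))⟩

lemma trim_walk {G : SimpleGraph V} (S : Set V) :
    ∀ {u v' : V} (q : G.Walk u v'), q.IsPath → v' ∈ S →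
    ∃ (w' : V) (q₁ : G.Walk u w'), q₁.IsPath ∧ w' ∈ S ∧ (∀ x ∈ q₁.support, x ∈ S → x = w') ∧
      (∀ x ∈ q₁.support, x ∈ q.support) := by
  intro u v' q
  induction q with
  | nil =>
    intro _ hu
    exact ⟨_, Walk.nil, Walk.IsPath.nil, hu, by simp, by simp⟩
  | @cons u y v h p ih =>
    intro hpath hv
    by_cases hu : u ∈ S
    · refine ⟨u, Walk.nil, Walk.IsPath.nil, hu, ?_, ?_⟩
      · intro x hx _
        simpa using hx
      · intro x hx
        simp only [Walk.support_nil, List.mem_singleton] at hx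
        rw [hx]
        exact Walk.start_mem_support _
    · obtain ⟨w', q₁, hq₁path, hw'S, honly, hsub⟩ := ih (hpath.of_cons) hv
      have hu_not : u ∉ q₁.support := fun hc => by
        have : u ∈ p.support := hsub u hc
        exact (Walk.cons_isPath_iff h p |>.mp hpath).2 this
      refine ⟨w', Walk.cons h q₁, (Walk.cons_isPath_iff h q₁).mpr ⟨hq₁path, hu_not⟩, hw'S, ?_, ?_⟩
      · intro x hx hxS
        rw [Walk.support_cons] at hx
        rcases List.mem_cons.mp hx with rfl | hx'
        · exact absurd hxS hu
        · exact honly x hx' hxS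
      · intro x hx
        rw [Walk.support_cons] at hx ⊢
        rcases List.mem_cons.mp hx with rfl | hx'
        · exact List.mem_cons_self
        · exact List.mem_cons_of_mem _ (hsub x hx')

lemma arc_of_cycle {G : SimpleGraph V} [DecidableEq V] {r x y : V} {w : G.Walk r r}
    (hw : w.IsCycle) (hx : x ∈ w.support) (hy : y ∈ w.support) (hxy : x ≠ y)
    {f : Sym2 V} (hf : f ∈ w.edges) :
    ∃ (A : G.Walk x y), A.IsTrail ∧ f ∈ A.edges ∧ (∀ g ∈ A.edges, g ∈ w.edges) ∧
      A.length < w.length := by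
  set w' := w.rotate x hx with hw'def
  have hperm_edges : w'.edges ~r w.edges := Walk.rotate_edges w x hx
  have hmemw : ∀ g, g ∈ w'.edges ↔ g ∈ w.edges := fun g => hperm_edges.perm.mem_iff
  have hlen' : w'.length = w.length := by
    rw [← Walk.length_edges, ← Walk.length_edges]
    exact hperm_edges.perm.length_eq
  have htrail' : w'.IsTrail := (hw.rotate hx).isTrail
  have hnn : ¬ w.Nil := hw.not_nil
  have hy' : y ∈ w'.support := by
    have hyt : y ∈ w.support.tail := closed_mem_tail_support w hnn hy
    have : y ∈ w'.support.tail := (Walk.support_rotate w x hx).perm.mem_iff.mpr hyt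
    exact List.mem_of_mem_tail this
  set A1 := w'.takeUntil y hy' with hA1
  set A2 := w'.dropUntil y hy' with hA2
  have hspec : A1.append A2 = w' := Walk.take_spec w' hy'
  have hedges : w'.edges = A1.edges ++ A2.edges := by
    conv_lhs => rw [← hspec]
    exact Walk.edges_append _ _
  have hlensplit : w'.length = A1.length + A2.length := by
    conv_lhs => rw [← hspec]
    exact Walk.length_append _ _
  have hnodup : (A1.edges ++ A2.edges).Nodup := hedges ▸ htrail'.edges_nodup
  have hnd := List.nodup_append.mp hnodup
  have hA1pos : 0 < A1.length := by
    rcases Nat.eq_zero_or_pos A1.length with h | h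
    · exact absurd (Walk.eq_of_length_eq_zero h) hxy
    · exact h
  have hA2pos : 0 < A2.length := by
    rcases Nat.eq_zero_or_pos A2.length with h | h
    · exact absurd (Walk.eq_of_length_eq_zero h).symm hxy
    · exact h
  have hf' : f ∈ w'.edges := (hmemw f).mpr hf
  rw [hedges] at hf'
  rcases List.mem_append.mp hf' with hfA | hfA
  · refine ⟨A1, ⟨hnd.1⟩, hfA, ?_, ?_⟩
    · intro g hg
      exact (hmemw g).mp (hedges ▸ List.mem_append_left _ hg)
    · omega
  · refine ⟨A2.reverse, Walk.IsTrail.reverse A2 ⟨hnd.2.1⟩, ?_, ?_, ?_⟩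
    · rw [Walk.edges_reverse]
      exact List.mem_reverse.mpr hfA
    · intro g hg
      rw [Walk.edges_reverse] at hg
      exact (hmemw g).mp (hedges ▸ List.mem_append_right _ (List.mem_reverse.mp hg))
    · rw [Walk.length_reverse]
      omega

end Helpers

lemma neg_cycles_share_two {V : Type*} [DecidableEq V] {G : SimpleGraph V} {σ : Sym2 V → Bool}
    (hnb : ¬ ∃ B : Set (Sym2 V), IsBarbell G σ B) (hconn : G.Connected)
    {v₁ v₂ : V} {w₁ : G.Walk v₁ v₁} {w₂ : G.Walk v₂ v₂} (h₁ : w₁.IsCycle) (h₂ : w₂.IsCycle)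
    (hodd₁ : Odd {g ∈ {g | g ∈ w₁.edges} | σ g = true}.ncard)
    (hodd₂ : Odd {g ∈ {g | g ∈ w₂.edges} | σ g = true}.ncard) :
    ∃ x y : V, x ≠ y ∧ x ∈ w₁.support ∧ y ∈ w₁.support ∧ x ∈ w₂.support ∧ y ∈ w₂.support := by
  by_contra hcon
  push_neg at hcon
  set S₁ : Set V := {x | x ∈ w₁.support} with hS₁
  set S₂ : Set V := {x | x ∈ w₂.support} with hS₂
  have hneg₁ : IsNegCycle G σ {g | g ∈ w₁.edges} S₁ := ⟨⟨v₁, w₁, h₁, rfl, rfl⟩, hodd₁⟩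
  have hneg₂ : IsNegCycle G σ {g | g ∈ w₂.edges} S₂ := ⟨⟨v₂, w₂, h₂, rfl, rfl⟩, hodd₂⟩
  have hsub : ∀ x y, x ∈ S₁ ∩ S₂ → y ∈ S₁ ∩ S₂ → x = y := by
    intro x y hx hy
    by_contra hne
    exact (hcon x y hne hx.1 hy.1 hx.2) hy.2
  rcases Set.eq_empty_or_nonempty (S₁ ∩ S₂) with hemp | ⟨z, hz⟩
  · -- disjoint: long barbell
    have hdisj : Disjoint S₁ S₂ := Set.disjoint_iff_inter_eq_empty.mpr hemp
    have hreach : G.Reachable v₁ v₂ := hconn.preconnected v₁ v₂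
    set q : G.Walk v₁ v₂ := hreach.some.toPath.1 with hqdef
    have hqp : q.IsPath := hreach.some.toPath.2
    have hv₂ : v₂ ∈ S₂ := w₂.start_mem_support
    obtain ⟨b', q₁, hq₁p, hb'S₂, honly₂, hsub₂⟩ := trim_walk S₂ q hqp hv₂
    have hv₁ : v₁ ∈ S₁ := w₁.start_mem_support
    obtain ⟨a', q₂, hq₂p, ha'S₁, honly₁, hsub₁⟩ := trim_walk S₁ q₁.reverse hq₁p.reverse hv₁
    set pfin := q₂.reverse with hpfin
    have hsupp_eq : ∀ x, x ∈ pfin.support ↔ x ∈ q₂.support := by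
      intro x
      rw [hpfin, Walk.support_reverse, List.mem_reverse]
    apply hnb
    refine ⟨_, {g | g ∈ w₁.edges}, {g | g ∈ w₂.edges},
      Or.inr ⟨S₁, S₂, a', b', pfin, hneg₁, hneg₂, hdisj, hq₂p.reverse, ha'S₁, hb'S₂, ?_, ?_, rfl⟩⟩
    · ext x
      simp only [Set.mem_inter_iff, Set.mem_setOf_eq, Set.mem_singleton_iff]
      constructor
      · rintro ⟨hxs, hxS₁⟩
        exact honly₁ x ((hsupp_eq x).mp hxs) hxS₁
      · rintro rfl
        exact ⟨(hsupp_eq _).mpr q₂.end_mem_support, ha'S₁⟩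
    · ext x
      simp only [Set.mem_inter_iff, Set.mem_setOf_eq, Set.mem_singleton_iff]
      constructor
      · rintro ⟨hxs, hxS₂⟩
        have hx₁ : x ∈ q₁.support := by
          have := hsub₁ x ((hsupp_eq x).mp hxs)
          rwa [Walk.support_reverse, List.mem_reverse] at this
        exact honly₂ x hx₁ hxS₂
      · rintro rfl
        exact ⟨(hsupp_eq _).mpr q₂.start_mem_support, hb'S₂⟩
  · -- share exactly one vertex: short barbell
    apply hnb
    refine ⟨_, {g | g ∈ w₁.edges}, {g | g ∈ w₂.edges},
      Or.inl ⟨S₁, S₂, hneg₁, hneg₂, ⟨z, ?_⟩, rfl⟩⟩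
    ext x
    simp only [Set.mem_singleton_iff]
    exact ⟨fun hx => hsub x z hx hz, fun hx => hx ▸ hz⟩


lemma nodup_length_le {α : Type*} [DecidableEq α] {l l' : List α} (h : l.Nodup)
    (hs : ∀ a ∈ l, a ∈ l') : l.length ≤ l'.length := by
  calc l.length = l.toFinset.card := (List.toFinset_card_of_nodup h).symm
    _ ≤ l'.toFinset.card := Finset.card_le_card (fun a ha => by
        rw [List.mem_toFinset] at ha ⊢; exact hs a ha)
    _ ≤ l'.length := l'.toFinset_card_le

lemma combine_trails {V : Type*} [DecidableEq V] {G : SimpleGraph V} {σ : Sym2 V → Bool}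
    (hnb : ¬ ∃ B : Set (Sym2 V), IsBarbell G σ B) (hconn : G.Connected)
    {e e' : Sym2 V} (hσe : σ e = true) (hσe' : σ e' = true)
    {u₁ u₂ : V} {U₁ : G.Walk u₁ u₁} {U₂ : G.Walk u₂ u₂}
    (hT₁ : U₁.IsTrail) (hT₂ : U₂.IsTrail)
    (he₁ : e ∈ U₁.edges) (he₂ : e' ∈ U₂.edges)
    (hdisj : ∀ g, g ∈ U₁.edges → g ∉ U₂.edges)
    (hneg₁ : ∀ g ∈ U₁.edges, σ g = true → g = e)
    (hneg₂ : ∀ g ∈ U₂.edges, σ g = true → g = e') :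
    ∃ (x : V) (T : G.Walk x x), T.IsTrail ∧ e ∈ T.edges ∧ e' ∈ T.edges ∧
      (∀ g ∈ T.edges, g ∈ U₁.edges ∨ g ∈ U₂.edges) ∧
      T.length < U₁.length + U₂.length := by
  obtain ⟨r₁, w₁, hc₁, hew₁, hsub₁⟩ := extract_cycle U₁.length U₁ le_rfl hT₁ he₁
  obtain ⟨r₂, w₂, hc₂, hew₂, hsub₂⟩ := extract_cycle U₂.length U₂ le_rfl hT₂ he₂
  have hset₁ : {g ∈ {g | g ∈ w₁.edges} | σ g = true} = {e} := by
    ext g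
    simp only [Set.mem_setOf_eq, Set.mem_singleton_iff]
    constructor
    · rintro ⟨hg, hσ⟩
      exact hneg₁ g (hsub₁ g hg) hσ
    · rintro rfl
      exact ⟨hew₁, hσe⟩
  have hset₂ : {g ∈ {g | g ∈ w₂.edges} | σ g = true} = {e'} := by
    ext g
    simp only [Set.mem_setOf_eq, Set.mem_singleton_iff]
    constructor
    · rintro ⟨hg, hσ⟩
      exact hneg₂ g (hsub₂ g hg) hσ
    · rintro rfl
      exact ⟨hew₂, hσe'⟩
  have hodd₁ : Odd {g ∈ {g | g ∈ w₁.edges} | σ g = true}.ncard := by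
    rw [hset₁, Set.ncard_singleton]; exact odd_one
  have hodd₂ : Odd {g ∈ {g | g ∈ w₂.edges} | σ g = true}.ncard := by
    rw [hset₂, Set.ncard_singleton]; exact odd_one
  obtain ⟨x, y, hxy, hx₁, hy₁, hx₂, hy₂⟩ :=
    neg_cycles_share_two hnb hconn hc₁ hc₂ hodd₁ hodd₂
  obtain ⟨A₁, hA₁t, heA₁, hA₁sub, hA₁len⟩ := arc_of_cycle hc₁ hx₁ hy₁ hxy hew₁
  obtain ⟨A₂, hA₂t, heA₂, hA₂sub, hA₂len⟩ := arc_of_cycle hc₂ hy₂ hx₂ hxy.symm hew₂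
  refine ⟨x, A₁.append A₂, ?_, ?_, ?_, ?_, ?_⟩
  · rw [Walk.isTrail_def, Walk.edges_append]
    refine List.nodup_append.mpr ⟨hA₁t.edges_nodup, hA₂t.edges_nodup, ?_⟩
    intro g hg1 g' hg2 hgg
    subst hgg
    exact hdisj g (hsub₁ g (hA₁sub g hg1)) (hsub₂ g (hA₂sub g hg2))
  · rw [Walk.edges_append]; exact List.mem_append_left _ heA₁
  · rw [Walk.edges_append]; exact List.mem_append_right _ heA₂
  · intro g hg
    rw [Walk.edges_append] at hg
    rcases List.mem_append.mp hg with h | h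
    · exact Or.inl (hsub₁ g (hA₁sub g h))
    · exact Or.inr (hsub₂ g (hA₂sub g h))
  · rw [Walk.length_append]
    have l1 : w₁.length ≤ U₁.length := by
      rw [← Walk.length_edges, ← Walk.length_edges]
      exact nodup_length_le hc₁.isTrail.edges_nodup hsub₁
    have l2 : w₂.length ≤ U₂.length := by
      rw [← Walk.length_edges, ← Walk.length_edges]
      exact nodup_length_le hc₂.isTrail.edges_nodup hsub₂
    omega

lemma closed_trail_to_cycle {V : Type*} [DecidableEq V] {G : SimpleGraph V} {σ : Sym2 V → Bool}
    (hnb : ¬ ∃ B : Set (Sym2 V), IsBarbell G σ B) (hconn : G.Connected)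
    {e e' : Sym2 V} (hσe : σ e = true) (hσe' : σ e' = true) :
    ∀ (n : ℕ) {v : V} (T : G.Walk v v), T.length ≤ n → T.IsTrail →
      e ∈ T.edges → e' ∈ T.edges → (∀ g ∈ T.edges, σ g = true → g = e ∨ g = e') →
      ∃ (r : V) (w : G.Walk r r), w.IsCycle ∧ e ∈ w.edges ∧ e' ∈ w.edges ∧
        ∀ g ∈ w.edges, g ∈ T.edges := by
  intro n
  induction n with
  | zero =>
    intro v T hlen _ he _ _
    have h0 : T.edges.length = 0 := by rw [Walk.length_edges]; omega
    rw [List.length_eq_zero_iff] at h0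
    rw [h0] at he
    simp at he
  | succ n ih =>
    intro v T hlen hT he he' hneg
    by_cases hc : T.IsCycle
    · exact ⟨v, T, hc, he, he', fun g hg => hg⟩
    have hnn : ¬ T.Nil := by
      intro h
      rw [Walk.nil_iff_length_eq] at h
      have h0 : T.edges.length = 0 := by rw [Walk.length_edges]; omega
      rw [List.length_eq_zero_iff] at h0
      rw [h0] at he
      simp at he
    obtain ⟨x, T₁, T₂, h1, h2, hn1, hn2, hsum, hiff, hdisj⟩ := closed_trail_split hT hnn hc
    have hp1 : 0 < T₁.length := Walk.not_nil_iff_lt_length.mp hn1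
    have hp2 : 0 < T₂.length := Walk.not_nil_iff_lt_length.mp hn2
    rcases (hiff e).mp he with he1 | he2 <;> rcases (hiff e').mp he' with he'1 | he'2
    · -- both in T₁
      obtain ⟨r, w, hw, hew, he'w, hsubw⟩ := ih T₁ (by omega) h1 he1 he'1
        (fun g hg hσ => hneg g ((hiff g).mpr (Or.inl hg)) hσ)
      exact ⟨r, w, hw, hew, he'w, fun g hg => (hiff g).mpr (Or.inl (hsubw g hg))⟩
    · -- e in T₁, e' in T₂
      have hneg₁ : ∀ g ∈ T₁.edges, σ g = true → g = e := by
        intro g hg hσ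
        rcases hneg g ((hiff g).mpr (Or.inl hg)) hσ with h | h
        · exact h
        · exact absurd he'2 (h ▸ hdisj g hg)
      have hneg₂ : ∀ g ∈ T₂.edges, σ g = true → g = e' := by
        intro g hg hσ
        rcases hneg g ((hiff g).mpr (Or.inr hg)) hσ with h | h
        · exact absurd hg (h ▸ fun hc' => hdisj e he1 hc')
        · exact h
      obtain ⟨x', T', hT't, heT', he'T', hsubT', hlenT'⟩ :=
        combine_trails hnb hconn hσe hσe' h1 h2 he1 he'2 hdisj hneg₁ hneg₂
      have hsubT : ∀ g ∈ T'.edges, g ∈ T.edges := by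
        intro g hg
        rcases hsubT' g hg with h | h
        · exact (hiff g).mpr (Or.inl h)
        · exact (hiff g).mpr (Or.inr h)
      obtain ⟨r, w, hw, hew, he'w, hsubw⟩ := ih T' (by omega) hT't heT' he'T'
        (fun g hg hσ => hneg g (hsubT g hg) hσ)
      exact ⟨r, w, hw, hew, he'w, fun g hg => hsubT g (hsubw g hg)⟩
    · -- e in T₂, e' in T₁
      have hneg₂ : ∀ g ∈ T₂.edges, σ g = true → g = e := by
        intro g hg hσ
        rcases hneg g ((hiff g).mpr (Or.inr hg)) hσ with h | h
        · exact h
        · exact absurd hg (h ▸ fun hc' => hdisj e' he'1 hc')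
      have hneg₁ : ∀ g ∈ T₁.edges, σ g = true → g = e' := by
        intro g hg hσ
        rcases hneg g ((hiff g).mpr (Or.inl hg)) hσ with h | h
        · exact absurd he2 (h ▸ hdisj g hg)
        · exact h
      obtain ⟨x', T', hT't, he'T', heT', hsubT', hlenT'⟩ :=
        combine_trails hnb hconn hσe' hσe h1 h2 he'1 he2 hdisj hneg₁ hneg₂
      have hsubT : ∀ g ∈ T'.edges, g ∈ T.edges := by
        intro g hg
        rcases hsubT' g hg with h | h
        · exact (hiff g).mpr (Or.inl h)
        · exact (hiff g).mpr (Or.inr h)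
      obtain ⟨r, w, hw, hew, he'w, hsubw⟩ := ih T' (by omega) hT't heT' he'T'
        (fun g hg hσ => hneg g (hsubT g hg) hσ)
      exact ⟨r, w, hw, hew, he'w, fun g hg => hsubT g (hsubw g hg)⟩
    · -- both in T₂
      obtain ⟨r, w, hw, hew, he'w, hsubw⟩ := ih T₂ (by omega) h2 he2 he'2
        (fun g hg hσ => hneg g ((hiff g).mpr (Or.inr hg)) hσ)
      exact ⟨r, w, hw, hew, he'w, fun g hg => (hiff g).mpr (Or.inr (hsubw g hg))⟩


lemma sym2_exists_rep {V : Type*} (f : Sym2 V) : ∃ a b, f = s(a, b) := by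
  induction f using Sym2.ind with
  | _ a b => exact ⟨a, b, rfl⟩

lemma toFinset_filter_card {α : Type*} [DecidableEq α] {l : List α} (h : l.Nodup)
    (p : α → Prop) [DecidablePred p] :
    (l.toFinset.filter p).card = (l.filter (fun a => p a)).length := by
  have h2 : (l.filter (fun a => p a)).toFinset = l.toFinset.filter p := by
    rw [List.toFinset_filter]
    simp
  rw [← h2, List.toFinset_card_of_nodup (h.filter _)]

lemma even_finset_cycle {V : Type*} [Fintype V] [DecidableEq V] {G : SimpleGraph V}
    (F : Finset (Sym2 V)) (hFG : ∀ g ∈ F, g ∈ G.edgeSet)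
    (heven : ∀ v : V, Even ((F.filter (fun g => v ∈ g)).card))
    {f : Sym2 V} (hf : f ∈ F) :
    ∃ (r : V) (w : G.Walk r r), w.IsCycle ∧ f ∈ w.edges ∧ ∀ g ∈ w.edges, g ∈ F := by
  obtain ⟨a, b, rfl⟩ := sym2_exists_rep f
  have hadj : G.Adj a b := (G.mem_edgeSet).mp (hFG _ hf)
  set P : ℕ → Prop := fun n => ∃ (x : V) (w : G.Walk a x), w.IsTrail ∧
    (∀ g ∈ w.edges, g ∈ F) ∧ s(a, b) ∈ w.edges ∧ w.length = n with hPdef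
  have hP1 : P 1 := by
    refine ⟨b, Walk.cons hadj Walk.nil, ⟨by simp⟩, ?_, ?_, by simp⟩
    · intro g hg
      simp only [Walk.edges_cons, Walk.edges_nil, List.mem_singleton] at hg
      rw [hg]
      exact hf
    · simp
  have hbdd : ∀ n ∈ {n | P n}, n ≤ F.card := by
    rintro n ⟨x, w, hwt, hwF, _, rfl⟩
    calc w.length = w.edges.length := (Walk.length_edges w).symm
      _ = w.edges.toFinset.card := (List.toFinset_card_of_nodup hwt.edges_nodup).symm
      _ ≤ F.card := Finset.card_le_card (fun g hg => hwF g (List.mem_toFinset.mp hg))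
  have hbddAbove : BddAbove {n | P n} := ⟨F.card, hbdd⟩
  have hmem : P (sSup {n | P n}) := Nat.sSup_mem ⟨1, hP1⟩ hbddAbove
  obtain ⟨x, w, hwt, hwF, hfw, hlen⟩ := hmem
  by_cases hxa : x = a
  · subst hxa
    obtain ⟨r, w', hw'c, hfw', hsub'⟩ := extract_cycle w.length w le_rfl hwt hfw
    exact ⟨r, w', hw'c, hfw', fun g hg => hwF g (hsub' g hg)⟩
  · exfalso
    have hodd : Odd (w.edges.filter (fun g => x ∈ g)).length :=
      open_walk_incidence_odd w (fun h => hxa h.symm)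
    have htotal : Even ((F.filter (fun g => x ∈ g)).card) := heven x
    have hsubf : w.edges.toFinset.filter (fun g => x ∈ g) ⊆ F.filter (fun g => x ∈ g) := by
      intro g hg
      rw [Finset.mem_filter] at hg ⊢
      exact ⟨hwF g (List.mem_toFinset.mp hg.1), hg.2⟩
    have hcard_used : (w.edges.toFinset.filter (fun g => x ∈ g)).card
        = (w.edges.filter (fun g => x ∈ g)).length :=
      toFinset_filter_card hwt.edges_nodup _
    have hne_sets : w.edges.toFinset.filter (fun g => x ∈ g) ≠ F.filter (fun g => x ∈ g) := by
      intro hcon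
      rw [← hcon, hcard_used] at htotal
      rw [Nat.even_iff] at htotal
      rw [Nat.odd_iff] at hodd
      omega
    obtain ⟨g, hgF, hgnot⟩ := Finset.exists_of_ssubset ⟨hsubf, fun hc => hne_sets
      (Finset.Subset.antisymm hsubf hc)⟩
    rw [Finset.mem_filter] at hgF
    have hgw : g ∉ w.edges := by
      intro hc
      exact hgnot (Finset.mem_filter.mpr ⟨List.mem_toFinset.mpr hc, hgF.2⟩)
    obtain ⟨y, rfl⟩ := Sym2.mem_iff_exists.mp hgF.2
    have hadj2 : G.Adj x y := (G.mem_edgeSet).mp (hFG _ hgF.1)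
    have hP' : P (w.length + 1) := by
      refine ⟨y, w.concat hadj2, ?_, ?_, ?_, by rw [Walk.length_concat]⟩
      · refine ⟨?_⟩
        rw [Walk.edges_concat, List.concat_eq_append]
        rw [List.nodup_append]
        exact ⟨hwt.edges_nodup, List.nodup_singleton _,
          fun g' hg' g'' hg'' heq => by
            subst heq; rw [List.mem_singleton.mp hg''] at hg'; exact hgw hg'⟩
      · intro g' hg'
        rw [Walk.edges_concat, List.concat_eq_append] at hg'
        rcases List.mem_append.mp hg' with h | h
        · exact hwF g' h
        · rw [List.mem_singleton.mp h]
          exact hgF.1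
      · rw [Walk.edges_concat, List.concat_eq_append]
        exact List.mem_append_left _ hfw
    have := le_csSup hbddAbove hP'
    omega

set_option maxHeartbeats 2000000 in
/-- in a barbell-free signed graph with `G⁺` connected, any two distinct
negative edges lie on a common positive cycle `C` with `2|E(C)| ≤ 2|E(G)| − |E(Ĝ⁺)|`. -/
theorem stmt10 {V : Type*} [Fintype V] (G : SimpleGraph V) (σ : Sym2 V → Bool)
    (hpos : (gplus G σ).Connected) (hnb : ¬ ∃ B : Set (Sym2 V), IsBarbell G σ B)
    (e e' : Sym2 V) (he : e ∈ negEdgeSet G σ) (he' : e' ∈ negEdgeSet G σ) (hne : e ≠ e') :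
    ∃ C : Set (Sym2 V), IsPosCycle G σ C ∧ e ∈ C ∧ e' ∈ C ∧
      2 * C.ncard + (nonBridgeEdges (gplus G σ)).ncard ≤ 2 * G.edgeSet.ncard := by
  classical
  obtain ⟨a, b, he_eq⟩ := sym2_exists_rep e
  obtain ⟨c, d, he'_eq⟩ := sym2_exists_rep e'
  subst he_eq he'_eq
  rw [negEdgeSet, Set.mem_sep_iff] at he he'
  obtain ⟨heG, hσe⟩ := he
  obtain ⟨he'G, hσe'⟩ := he'
  set H := gplus G σ with hHdef
  have hHG : H ≤ G := SimpleGraph.deleteEdges_le _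
  have hHedge : ∀ {g : Sym2 V}, g ∈ H.edgeSet → g ∈ G.edgeSet ∧ ¬ σ g = true := by
    intro g hg
    rw [hHdef, gplus, SimpleGraph.edgeSet_deleteEdges] at hg
    exact ⟨hg.1, hg.2⟩
  have hconnG : G.Connected := SimpleGraph.Connected.mono hHG hpos
  have hadj_ab : G.Adj a b := (G.mem_edgeSet).mp heG
  have hadj_cd : G.Adj c d := (G.mem_edgeSet).mp he'G
  -- construction of a negative cycle through a given negative edge
  have mkcyc : ∀ (a' b' : V), G.Adj a' b' → σ s(a', b') = true →
      ∃ (w : G.Walk a' a'), w.IsCycle ∧ s(a', b') ∈ w.edges ∧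
        ∀ g ∈ w.edges, g = s(a', b') ∨ g ∈ H.edgeSet := by
    intro a' b' hadj hσ
    have hreach : H.Reachable b' a' := hpos.preconnected b' a'
    set ρ := hreach.some.toPath with hρ
    have hsub : ∀ g ∈ ρ.1.edges, g ∈ G.edgeSet :=
      fun g hg => (hHedge (ρ.1.edges_subset_edgeSet hg)).1
    set ρG := ρ.1.transfer G hsub with hρG
    have hρGedges : ρG.edges = ρ.1.edges := Walk.edges_transfer _ _
    have hnotin : s(a', b') ∉ ρG.edges := by
      rw [hρGedges]
      intro hcon
      exact (hHedge (ρ.1.edges_subset_edgeSet hcon)).2 hσ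
    have hρGpath : ρG.IsPath := Walk.IsPath.transfer _ ρ.2
    refine ⟨Walk.cons hadj ρG, (Walk.cons_isCycle_iff ρG hadj).mpr ⟨hρGpath, hnotin⟩,
      by simp, ?_⟩
    intro g hg
    rw [Walk.edges_cons] at hg
    rcases List.mem_cons.mp hg with h | h
    · exact Or.inl h
    · right
      rw [hρGedges] at h
      exact ρ.1.edges_subset_edgeSet h
  obtain ⟨w₁, hc₁, hein₁, hedge₁⟩ := mkcyc a b hadj_ab hσe
  obtain ⟨w₂, hc₂, hein₂, hedge₂⟩ := mkcyc c d hadj_cd hσe'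
  -- finsets
  set GE := (Set.toFinite G.edgeSet).toFinset with hGEdef
  set E0 := (Set.toFinite (nonBridgeEdges H)).toFinset with hE0def
  have hGEmem : ∀ {g : Sym2 V}, g ∈ GE ↔ g ∈ G.edgeSet := fun {g} => Set.Finite.mem_toFinset _
  have hE0mem : ∀ {g : Sym2 V}, g ∈ E0 ↔ (g ∈ H.edgeSet ∧ ¬ H.IsBridge g) :=
    fun {g} => Set.Finite.mem_toFinset _
  have hE0subGE : E0 ⊆ GE :=
    fun g hg => hGEmem.mpr (hHedge ((hE0mem.mp hg).1)).1
  have hE0pos : ∀ g ∈ E0, ¬ σ g = true := fun g hg => (hHedge ((hE0mem.mp hg).1)).2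
  -- the family of even subsets of E0
  set ZF := (E0.powerset).filter
    (fun Z => ∀ v : V, Even ((Z.filter (fun g => v ∈ g)).card)) with hZFdef
  have hZFmem : ∀ {Z}, Z ∈ ZF ↔
      (Z ⊆ E0 ∧ ∀ v : V, Even ((Z.filter (fun g => v ∈ g)).card)) := by
    intro Z
    rw [hZFdef, Finset.mem_filter, Finset.mem_powerset]
  have hZFempty : (∅ : Finset (Sym2 V)) ∈ ZF := hZFmem.mpr ⟨by simp, by simp⟩
  have hZFclosed : ∀ Z₁ ∈ ZF, ∀ Z₂ ∈ ZF, Z₁ ∆ Z₂ ∈ ZF := by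
    intro Z₁ h₁ Z₂ h₂
    rw [hZFmem] at h₁ h₂ ⊢
    constructor
    · intro g hg
      rcases Finset.mem_symmDiff.mp hg with ⟨h, _⟩ | ⟨h, _⟩
      exacts [h₁.1 h, h₂.1 h]
    · intro v
      rw [filter_symmDiff_eq]
      exact even_card_symmDiff (h₁.2 v) (h₂.2 v)
  have hZFcov : ∀ f ∈ E0, ∃ Z ∈ ZF, f ∈ Z := by
    intro f hf
    obtain ⟨hfH, hfnb⟩ := hE0mem.mp hf
    have h1 : ¬ (f ∈ H.edgeSet ∧ ∀ ⦃u : V⦄ (p : H.Walk u u), p.IsCycle → f ∉ p.edges) := by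
      rw [not_and]; intro hf'
      rw [← SimpleGraph.isBridge_iff_forall_cycle_notMem hf']
      exact hfnb
    rw [not_and] at h1
    have h2 := h1 hfH
    push_neg at h2
    obtain ⟨u, p, hpc, hfp⟩ := h2
    refine ⟨p.edges.toFinset, hZFmem.mpr ⟨?_, ?_⟩, List.mem_toFinset.mpr hfp⟩
    · intro g hg
      rw [List.mem_toFinset] at hg
      refine hE0mem.mpr ⟨p.edges_subset_edgeSet hg, fun hb => ?_⟩
      exact (SimpleGraph.isBridge_iff_forall_cycle_notMem (p.edges_subset_edgeSet hg)).mp hb p hpc hg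
    · intro v
      rw [toFinset_filter_card hpc.isTrail.edges_nodup]
      exact closed_walk_incidence_even p v
  -- the family of admissible even edge sets
  set FFam := GE.powerset.filter (fun F => (∀ v : V, Even ((F.filter (fun g => v ∈ g)).card)) ∧
    s(a, b) ∈ F ∧ s(c, d) ∈ F ∧
    ∀ g ∈ F, σ g = true → g = s(a, b) ∨ g = s(c, d)) with hFFamdef
  have hFFammem : ∀ {F}, F ∈ FFam ↔ (F ⊆ GE ∧
      ((∀ v : V, Even ((F.filter (fun g => v ∈ g)).card)) ∧
      s(a, b) ∈ F ∧ s(c, d) ∈ F ∧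
      ∀ g ∈ F, σ g = true → g = s(a, b) ∨ g = s(c, d))) := by
    intro F
    rw [hFFamdef, Finset.mem_filter, Finset.mem_powerset]
  -- the initial member
  have hZ₁even : ∀ v : V, Even ((w₁.edges.toFinset.filter (fun g => v ∈ g)).card) := by
    intro v
    rw [toFinset_filter_card hc₁.isTrail.edges_nodup]
    exact closed_walk_incidence_even w₁ v
  have hZ₂even : ∀ v : V, Even ((w₂.edges.toFinset.filter (fun g => v ∈ g)).card) := by
    intro v
    rw [toFinset_filter_card hc₂.isTrail.edges_nodup]
    exact closed_walk_incidence_even w₂ v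
  have he_notZ₂ : s(a, b) ∉ w₂.edges.toFinset := by
    intro hcon
    rcases hedge₂ _ (List.mem_toFinset.mp hcon) with h | h
    · exact hne h
    · exact (hHedge h).2 hσe
  have he'_notZ₁ : s(c, d) ∉ w₁.edges.toFinset := by
    intro hcon
    rcases hedge₁ _ (List.mem_toFinset.mp hcon) with h | h
    · exact hne h.symm
    · exact (hHedge h).2 hσe'
  have hF₀ : w₁.edges.toFinset ∆ w₂.edges.toFinset ∈ FFam := by
    rw [hFFammem]
    refine ⟨?_, ?_, ?_, ?_, ?_⟩
    · intro g hg
      rcases Finset.mem_symmDiff.mp hg with ⟨h, _⟩ | ⟨h, _⟩ <;> rw [List.mem_toFinset] at h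
      · exact hGEmem.mpr (w₁.edges_subset_edgeSet h)
      · exact hGEmem.mpr (w₂.edges_subset_edgeSet h)
    · intro v
      rw [filter_symmDiff_eq]
      exact even_card_symmDiff (hZ₁even v) (hZ₂even v)
    · exact Finset.mem_symmDiff.mpr (Or.inl ⟨List.mem_toFinset.mpr hein₁, he_notZ₂⟩)
    · exact Finset.mem_symmDiff.mpr (Or.inr ⟨List.mem_toFinset.mpr hein₂, he'_notZ₁⟩)
    · intro g hg hσg
      rcases Finset.mem_symmDiff.mp hg with ⟨h, _⟩ | ⟨h, _⟩ <;> rw [List.mem_toFinset] at h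
      · rcases hedge₁ g h with h' | h'
        · exact Or.inl h'
        · exact absurd hσg (hHedge h').2
      · rcases hedge₂ g h with h' | h'
        · exact Or.inr h'
        · exact absurd hσg (hHedge h').2
  obtain ⟨F, hFmem, hFmin⟩ := Finset.exists_min_image FFam (fun F => (F ∩ E0).card) ⟨_, hF₀⟩
  obtain ⟨hFsubGE, hFeven, heF, he'F, hFneg⟩ := hFFammem.mp hFmem
  -- minimality gives the half bound
  have hmin' : ∀ Z ∈ ZF, 2 * (Z ∩ (F ∩ E0)).card ≤ Z.card := by
    intro Z hZ
    obtain ⟨hZE0, hZeven⟩ := hZFmem.mp hZ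
    have hFZmem : F ∆ Z ∈ FFam := by
      rw [hFFammem]
      refine ⟨?_, ?_, ?_, ?_, ?_⟩
      · intro g hg
        rcases Finset.mem_symmDiff.mp hg with ⟨h, _⟩ | ⟨h, _⟩
        · exact hFsubGE h
        · exact hE0subGE (hZE0 h)
      · intro v
        rw [filter_symmDiff_eq]
        exact even_card_symmDiff (hFeven v) (hZeven v)
      · exact Finset.mem_symmDiff.mpr
          (Or.inl ⟨heF, fun hcon => hE0pos _ (hZE0 hcon) hσe⟩)
      · exact Finset.mem_symmDiff.mpr
          (Or.inl ⟨he'F, fun hcon => hE0pos _ (hZE0 hcon) hσe'⟩)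
      · intro g hg hσg
        rcases Finset.mem_symmDiff.mp hg with ⟨h, _⟩ | ⟨h, _⟩
        · exact hFneg g h hσg
        · exact absurd hσg (hE0pos _ (hZE0 h))
    have hle := hFmin _ hFZmem
    have heq : (F ∆ Z) ∩ E0 = (F ∩ E0) ∆ Z := by
      ext g
      have hz : g ∈ Z → g ∈ E0 := fun h => hZE0 h
      simp only [Finset.mem_inter, Finset.mem_symmDiff]
      tauto
    rw [heq] at hle
    have hid := card_symmDiff_identity (F ∩ E0) Z
    rw [Finset.inter_comm]
    omega
  have hhalf : 2 * (F ∩ E0).card ≤ E0.card :=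
    count_lemma E0 ZF ⟨∅, hZFempty⟩ (fun Z hZ => (hZFmem.mp hZ).1) hZFclosed hZFcov
      (F ∩ E0) Finset.inter_subset_right hmin'
  -- extraction of a cycle through both negative edges inside F
  have hFG' : ∀ g ∈ F, g ∈ G.edgeSet := fun g hg => hGEmem.mp (hFsubGE hg)
  obtain ⟨rA, wA, hwAc, heA, hsubA⟩ := even_finset_cycle F hFG' hFeven heF
  have hT : ∃ (x : V) (T : G.Walk x x), T.IsTrail ∧ s(a, b) ∈ T.edges ∧
      s(c, d) ∈ T.edges ∧ ∀ g ∈ T.edges, g ∈ F := by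
    by_cases he'A : s(c, d) ∈ wA.edges
    · exact ⟨rA, wA, hwAc.isTrail, heA, he'A, hsubA⟩
    · set F₂ := F \ wA.edges.toFinset with hF₂def
      have hsubZA : wA.edges.toFinset ⊆ F := fun g hg => hsubA g (List.mem_toFinset.mp hg)
      have hF₂even : ∀ v : V, Even ((F₂.filter (fun g => v ∈ g)).card) := by
        intro v
        have heq2 : F₂.filter (fun g => v ∈ g) =
            F.filter (fun g => v ∈ g) \ (wA.edges.toFinset.filter (fun g => v ∈ g)) := by
          ext g
          simp only [hF₂def, Finset.mem_filter, Finset.mem_sdiff]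
          tauto
        rw [heq2]
        refine even_card_sdiff (Finset.filter_subset_filter _ hsubZA) (hFeven v) ?_
        rw [toFinset_filter_card hwAc.isTrail.edges_nodup]
        exact closed_walk_incidence_even wA v
      have he'F₂ : s(c, d) ∈ F₂ :=
        Finset.mem_sdiff.mpr ⟨he'F, fun hcon => he'A (List.mem_toFinset.mp hcon)⟩
      have hF₂G : ∀ g ∈ F₂, g ∈ G.edgeSet := fun g hg => hFG' g (Finset.mem_sdiff.mp hg).1
      obtain ⟨rB, wB, hwBc, he'B, hsubB⟩ := even_finset_cycle F₂ hF₂G hF₂even he'F₂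
      have hdisjAB : ∀ g, g ∈ wA.edges → g ∉ wB.edges := by
        intro g hgA hgB
        exact (Finset.mem_sdiff.mp (hsubB g hgB)).2 (List.mem_toFinset.mpr hgA)
      have hnegA : ∀ g ∈ wA.edges, σ g = true → g = s(a, b) := by
        intro g hg hσg
        rcases hFneg g (hsubA g hg) hσg with h | h
        · exact h
        · exact absurd (h ▸ hg) he'A
      have hnegB : ∀ g ∈ wB.edges, σ g = true → g = s(c, d) := by
        intro g hg hσg
        rcases hFneg g (Finset.mem_sdiff.mp (hsubB g hg)).1 hσg with h | h
        · exact absurd (List.mem_toFinset.mpr (h ▸ heA))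
            (fun hcon => (Finset.mem_sdiff.mp (hsubB g hg)).2 (h ▸ hcon))
        · exact h
      obtain ⟨x, T, hTt, heT, he'T, hTsub, _⟩ :=
        combine_trails hnb hconnG hσe hσe' hwAc.isTrail hwBc.isTrail heA he'B hdisjAB
          hnegA hnegB
      refine ⟨x, T, hTt, heT, he'T, fun g hg => ?_⟩
      rcases hTsub g hg with h | h
      · exact hsubA g h
      · exact (Finset.mem_sdiff.mp (hsubB g h)).1
  obtain ⟨x, T, hTt, heT, he'T, hTF⟩ := hT
  obtain ⟨r, w, hwc, hew, he'w, hwT⟩ := closed_trail_to_cycle hnb hconnG hσe hσe'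
    T.length T le_rfl hTt heT he'T (fun g hg hσg => hFneg g (hTF g hg) hσg)
  have hwF : ∀ g ∈ w.edges, g ∈ F := fun g hg => hTF g (hwT g hg)
  refine ⟨{g | g ∈ w.edges}, ⟨⟨{y | y ∈ w.support}, r, w, hwc, rfl, rfl⟩, ?_⟩, hew, he'w, ?_⟩
  · have hsetneg : {g ∈ {g | g ∈ w.edges} | σ g = true} = {s(a, b), s(c, d)} := by
      ext g
      simp only [Set.mem_setOf_eq, Set.mem_sep_iff, Set.mem_insert_iff, Set.mem_singleton_iff]
      constructor
      · rintro ⟨hg, hσg⟩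
        exact hFneg g (hwF g hg) hσg
      · rintro (rfl | rfl)
        exacts [⟨hew, hσe⟩, ⟨he'w, hσe'⟩]
    rw [hsetneg, Set.ncard_pair hne]
    exact even_two
  · -- the length bound
    have hCcoe : ({g | g ∈ w.edges} : Set (Sym2 V)).ncard = w.edges.toFinset.card := by
      rw [← List.coe_toFinset, Set.ncard_coe_finset]
    have hE0coe : (nonBridgeEdges H).ncard = E0.card := Set.ncard_eq_toFinset_card _
    have hGEcoe : G.edgeSet.ncard = GE.card := Set.ncard_eq_toFinset_card _
    rw [hCcoe, hE0coe, hGEcoe]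
    set Cfin := w.edges.toFinset with hCfindef
    set A := Cfin.filter (fun g => σ g = true) with hAdef
    set B := Cfin.filter (fun g => ¬ σ g = true) with hBdef
    have hsplitC : A.card + B.card = Cfin.card :=
      Finset.card_filter_add_card_filter_not _
    have hAeq : A = {s(a, b), s(c, d)} := by
      ext g
      simp only [hAdef, Finset.mem_filter, Finset.mem_insert, Finset.mem_singleton]
      constructor
      · rintro ⟨hg, hσg⟩
        exact hFneg g (hwF g (List.mem_toFinset.mp hg)) hσg
      · rintro (rfl | rfl)
        exacts [⟨List.mem_toFinset.mpr hew, hσe⟩, ⟨List.mem_toFinset.mpr he'w, hσe'⟩]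
    have hAcard : A.card = 2 := by
      rw [hAeq]
      exact Finset.card_pair hne
    set HEfin := GE.filter (fun g => ¬ σ g = true) with hHEdef
    have hBsubHE : B ⊆ HEfin := by
      intro g hg
      rw [hBdef, Finset.mem_filter] at hg
      exact Finset.mem_filter.mpr
        ⟨hGEmem.mpr (hFG' g (hwF g (List.mem_toFinset.mp hg.1))), hg.2⟩
    have hE0subHE : E0 ⊆ HEfin := by
      intro g hg
      exact Finset.mem_filter.mpr ⟨hE0subGE hg, hE0pos g hg⟩
    have hBsplit : (B \ E0).card + (B ∩ E0).card = B.card :=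
      Finset.card_sdiff_add_card_inter B E0
    have hBinter : (B ∩ E0).card ≤ (F ∩ E0).card := by
      apply Finset.card_le_card
      intro g hg
      rw [Finset.mem_inter] at hg ⊢
      refine ⟨?_, hg.2⟩
      have := hg.1
      rw [hBdef, Finset.mem_filter] at this
      exact hwF g (List.mem_toFinset.mp this.1)
    have hBsd : (B \ E0).card ≤ (HEfin \ E0).card :=
      Finset.card_le_card (fun g hg => by
        rw [Finset.mem_sdiff] at hg ⊢
        exact ⟨hBsubHE hg.1, hg.2⟩)
    have hHEsplit : (HEfin \ E0).card + E0.card = HEfin.card := by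
      have := Finset.card_sdiff_add_card_inter HEfin E0
      rwa [Finset.inter_eq_right.mpr hE0subHE] at this
    have hGEsplit : (GE.filter (fun g => σ g = true)).card + HEfin.card = GE.card := by
      rw [hHEdef]
      exact Finset.card_filter_add_card_filter_not _
    have hpairsub : ({s(a, b), s(c, d)} : Finset (Sym2 V)) ⊆ GE.filter (fun g => σ g = true) := by
      intro g hg
      rcases Finset.mem_insert.mp hg with rfl | hg'
      · exact Finset.mem_filter.mpr ⟨hGEmem.mpr heG, hσe⟩
      · rw [Finset.mem_singleton] at hg'
        subst hg'
        exact Finset.mem_filter.mpr ⟨hGEmem.mpr he'G, hσe'⟩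
    have hpair2 : 2 ≤ (GE.filter (fun g => σ g = true)).card := by
      have := Finset.card_le_card hpairsub
      rwa [Finset.card_pair hne] at this
    omega
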